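/- Let N ≥ 1 and 0 < r₀ < 1. Let f : ℝ^N → ℝ be integrable, vanish outside B, satisfy f ≥ 0 a.e. on {‖x‖ < r₀} and f ≤ 0 a.e. on {r₀ ≤ ‖x‖ < 1}, and suppose the set {x : r₀ < ‖x‖ < 1 and f(x) < 0} has positive Lebesgue measure. Let H : ℝ → ℝ be strictly decreasing and positive on [0, 1) and G : ℝ → ℝ be strictly increasing and positive on [0, 1); set h(x) := H(‖x‖) and g(x) := G(‖x‖), and assume f·h and f·g are integrable on B with ∫_B f·h dx = 0. Then ∫_B f·g dx < 0. -/

import Mathlib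

open MeasureTheory

/-- Comparison lemma: if `f` vanishes outside the unit ball `B`, is nonnegative a.e. on
`{‖x‖ < r₀}`, nonpositive a.e. on `{r₀ ≤ ‖x‖ < 1}`, strictly negative on a set of
positive measure inside `{r₀ < ‖x‖ < 1}`, and is orthogonal to a positive radially
strictly decreasing weight `h`, then `∫_B f·g < 0` for every positive radially
strictly increasing weight `g`. -/
theorem integral_mul_increasing_neg (N : ℕ) (hN : 1 ≤ N) (r₀ : ℝ)
    (hr₀0 : 0 < r₀) (hr₀1 : r₀ < 1)
    (f : EuclideanSpace ℝ (Fin N) → ℝ) (hf : Integrable f)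
    (hvanish : ∀ x : EuclideanSpace ℝ (Fin N), 1 ≤ ‖x‖ → f x = 0)
    (hpos : ∀ᵐ x : EuclideanSpace ℝ (Fin N), ‖x‖ < r₀ → 0 ≤ f x)
    (hneg : ∀ᵐ x : EuclideanSpace ℝ (Fin N), r₀ ≤ ‖x‖ → ‖x‖ < 1 → f x ≤ 0)
    (hmeas : 0 < volume {x : EuclideanSpace ℝ (Fin N) |
      r₀ < ‖x‖ ∧ ‖x‖ < 1 ∧ f x < 0})
    (H : ℝ → ℝ) (hH : StrictAntiOn H (Set.Ico 0 1))
    (hHpos : ∀ t ∈ Set.Ico (0 : ℝ) 1, 0 < H t)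
    (G : ℝ → ℝ) (hG : StrictMonoOn G (Set.Ico 0 1))
    (hGpos : ∀ t ∈ Set.Ico (0 : ℝ) 1, 0 < G t)
    (hintH : IntegrableOn (fun x => f x * H ‖x‖)
      (Metric.ball (0 : EuclideanSpace ℝ (Fin N)) 1))
    (hintG : IntegrableOn (fun x => f x * G ‖x‖)
      (Metric.ball (0 : EuclideanSpace ℝ (Fin N)) 1))
    (horth : ∫ x in Metric.ball (0 : EuclideanSpace ℝ (Fin N)) 1, f x * H ‖x‖ = 0) :
    ∫ x in Metric.ball (0 : EuclideanSpace ℝ (Fin N)) 1, f x * G ‖x‖ < 0 := by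
  set B := Metric.ball (0 : EuclideanSpace ℝ (Fin N)) 1 with hB
  have hr₀mem : r₀ ∈ Set.Ico (0 : ℝ) 1 := ⟨hr₀0.le, hr₀1⟩
  have hHr₀ : 0 < H r₀ := hHpos r₀ hr₀mem
  set c : ℝ := G r₀ / H r₀ with hc
  have hc0 : 0 < c := div_pos (hGpos r₀ hr₀mem) hHr₀
  have hcH : c * H r₀ = G r₀ := div_mul_cancel₀ _ hHr₀.ne'
  set ψ : EuclideanSpace ℝ (Fin N) → ℝ :=
    fun x => c * (f x * H ‖x‖) - f x * G ‖x‖ with hψ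
  have hψeq : ∀ x, ψ x = f x * (c * H ‖x‖ - G ‖x‖) := by
    intro x; simp only [hψ]; ring
  have hψint : IntegrableOn ψ B := (hintH.const_mul c).sub hintG
  -- ψ ≥ 0 a.e. on B
  have hψnn : 0 ≤ᵐ[volume.restrict B] ψ := by
    filter_upwards [hpos.filter_mono (ae_mono Measure.restrict_le_self),
      hneg.filter_mono (ae_mono Measure.restrict_le_self),
      ae_restrict_mem measurableSet_ball] with x hxp hxn hxB
    have hx1 : ‖x‖ < 1 := by simpa [B, mem_ball_zero_iff] using hxB
    have hxmem : ‖x‖ ∈ Set.Ico (0 : ℝ) 1 := ⟨norm_nonneg x, hx1⟩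
    rw [Pi.zero_apply, hψeq]
    rcases lt_or_ge ‖x‖ r₀ with h | h
    · have hG' : G ‖x‖ ≤ G r₀ := (hG hxmem hr₀mem h).le
      have hH' : H r₀ ≤ H ‖x‖ := (hH hxmem hr₀mem h).le
      have : G ‖x‖ ≤ c * H ‖x‖ := by
        calc G ‖x‖ ≤ G r₀ := hG'
        _ = c * H r₀ := hcH.symm
        _ ≤ c * H ‖x‖ := by nlinarith
      exact mul_nonneg (hxp h) (by linarith)
    · have hG' : G r₀ ≤ G ‖x‖ := (hG.le_iff_le hr₀mem hxmem).mpr h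
      have hH' : H ‖x‖ ≤ H r₀ := (hH.le_iff_ge hxmem hr₀mem).mpr h
      have : c * H ‖x‖ ≤ G ‖x‖ := by
        calc c * H ‖x‖ ≤ c * H r₀ := by nlinarith
        _ = G r₀ := hcH
        _ ≤ G ‖x‖ := hG'
      nlinarith [hxn h hx1]
  -- positive measure of support
  have hsupp : 0 < volume (Function.support ψ ∩ B) := by
    refine lt_of_lt_of_le hmeas (measure_mono ?_)
    rintro x ⟨hr, h1, hfx⟩
    have hxmem : ‖x‖ ∈ Set.Ico (0 : ℝ) 1 := ⟨norm_nonneg x, h1⟩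
    have hG' : G r₀ < G ‖x‖ := hG hr₀mem hxmem hr
    have hH' : H ‖x‖ < H r₀ := hH hr₀mem hxmem hr
    have hkey : c * H ‖x‖ - G ‖x‖ < 0 := by nlinarith
    constructor
    · rw [Function.mem_support, hψeq]
      exact (mul_pos_of_neg_of_neg hfx hkey).ne'
    · simpa [B, mem_ball_zero_iff] using h1
  have hψpos : 0 < ∫ x in B, ψ x :=
    (setIntegral_pos_iff_support_of_nonneg_ae hψnn hψint).2 hsupp
  have hsplit : ∫ x in B, ψ x
      = c * (∫ x in B, f x * H ‖x‖) - ∫ x in B, f x * G ‖x‖ := by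
    rw [hψ, integral_sub (hintH.const_mul c) hintG, MeasureTheory.integral_const_mul c]
  rw [hsplit, horth, mul_zero, zero_sub] at hψpos
  linarith
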